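/- arXiv:0811.4739 — 3 statements merged into one kernel-verified Lean document; each statement's English description precedes it below -/
import Mathlib

section
/- For every real number s > 1, the prime zeta function satisfies the Möbius-inverted formula P(s) = Σ_{k=1}^∞ (μ(k)/k)·log ζ(k·s), where μ is the Möbius function, and the series converges. -/
set_option maxHeartbeats 1000000


/-- The Riemann zeta function for real arguments `s > 1`. -/
noncomputable def zetaR (s : ℝ) : ℝ := ∑' n : ℕ, 1 / ((n : ℝ) + 1) ^ s

/-- The prime zeta function `P(s) = ∑_{p prime} p^{-s}` for real `s > 1`. -/
noncomputable def primeZeta (s : ℝ) : ℝ := ∑' p : Nat.Primes, 1 / ((p : ℕ) : ℝ) ^ s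

open Real

namespace PZaux

/-- completely multiplicative function `n ↦ n^{-t}` -/
noncomputable def fh (t : ℝ) (ht : 0 < t) : ℕ →*₀ ℝ where
  toFun n := (n : ℝ) ^ (-t)
  map_zero' := by
    show ((0:ℕ) : ℝ) ^ (-t) = 0
    rw [Nat.cast_zero, Real.zero_rpow (by linarith)]
  map_one' := by simp
  map_mul' m n := by
    show ((m*n : ℕ) : ℝ) ^ (-t) = _
    rw [Nat.cast_mul, Real.mul_rpow (Nat.cast_nonneg m) (Nat.cast_nonneg n)]

lemma summable_rpow {t : ℝ} (ht : 1 < t) : Summable fun n : ℕ => (n : ℝ) ^ (-t) :=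
  Real.summable_nat_rpow.mpr (by linarith)

lemma zetaR_eq' {t : ℝ} (ht : 1 < t) :
    (∑' n : ℕ, (n : ℝ) ^ (-t)) = ∑' n : ℕ, 1 / ((n : ℝ) + 1) ^ t := by
  rw [Summable.tsum_eq_zero_add (summable_rpow ht)]
  rw [Nat.cast_zero, Real.zero_rpow (by linarith : -t ≠ 0), zero_add]
  refine tsum_congr fun n => ?_
  push_cast
  rw [Real.rpow_neg (by positivity), one_div]

lemma xp_pos (t : ℝ) (p : Nat.Primes) : 0 < ((p : ℕ) : ℝ) ^ (-t) :=
  Real.rpow_pos_of_pos (by exact_mod_cast p.prop.pos) _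

lemma xp_lt_half {t : ℝ} (ht : 1 < t) (p : Nat.Primes) : ((p : ℕ) : ℝ) ^ (-t) < 1 / 2 := by
  have hp2 : (2 : ℝ) ≤ ((p : ℕ) : ℝ) := by exact_mod_cast p.prop.two_le
  have h1 : ((p : ℕ) : ℝ) ^ (-t) ≤ (2 : ℝ) ^ (-t) := by
    rw [Real.rpow_neg (by positivity), Real.rpow_neg (by norm_num)]
    exact inv_anti₀ (Real.rpow_pos_of_pos two_pos t)
      (Real.rpow_le_rpow (by norm_num) hp2 (by linarith))
  have h2 : (2 : ℝ) ^ (-t) < 2 ^ (-1 : ℝ) :=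
    Real.rpow_lt_rpow_of_exponent_lt (by norm_num) (by linarith)
  rw [Real.rpow_neg_one] at h2
  norm_num at h2
  linarith

lemma neg_log_le {x : ℝ} (h0 : 0 ≤ x) (h1 : x ≤ 1 / 2) : -Real.log (1 - x) ≤ 2 * x := by
  have hpos : (0 : ℝ) < 1 - x := by linarith
  rw [neg_le, ← Real.log_exp (-(2 * x))]
  apply Real.log_le_log (Real.exp_pos _)
  rw [Real.exp_neg]
  have key : 1 ≤ (1 - x) * Real.exp (2 * x) := by
    nlinarith [Real.add_one_le_exp (2 * x), Real.exp_pos (2 * x)]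
  rw [inv_le_iff_one_le_mul₀ (Real.exp_pos _)]
  nlinarith [Real.exp_pos (2 * x)]


lemma summable_neg_log {t : ℝ} (ht : 1 < t) :
    Summable fun p : Nat.Primes => -Real.log (1 - ((p : ℕ) : ℝ) ^ (-t)) := by
  have hb : Summable fun p : Nat.Primes => 2 * (((p : ℕ) : ℝ) ^ (-t)) :=
    (((summable_rpow ht).comp_injective Nat.Primes.coe_nat_injective)).mul_left 2
  refine Summable.of_nonneg_of_le (fun p => ?_) (fun p => ?_) hb
  · rw [neg_nonneg]
    exact Real.log_nonpos (by linarith [xp_lt_half ht p]) (by linarith [xp_pos t p])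
  · exact neg_log_le (xp_pos t p).le (xp_lt_half ht p).le

lemma hasSum_log_zeta {t : ℝ} (ht : 1 < t) :
    HasSum (fun p : Nat.Primes => -Real.log (1 - ((p : ℕ) : ℝ) ^ (-t)))
      (Real.log (zetaR t)) := by
  have ht0 : (0 : ℝ) < t := by linarith
  have hnorm : Summable fun n : ℕ => ‖fh t ht0 n‖ := by
    refine (summable_rpow ht).congr fun n => ?_
    rw [Real.norm_eq_abs]
    exact (abs_of_nonneg (Real.rpow_nonneg (Nat.cast_nonneg n) _)).symm
  have hprod := EulerProduct.eulerProduct_completely_multiplicative_hasProd hnorm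
  have hsum := summable_neg_log ht
  have hexp := hsum.hasSum.rexp
  have hfun : (Real.exp ∘ fun p : Nat.Primes => -Real.log (1 - ((p : ℕ) : ℝ) ^ (-t)))
      = fun p : Nat.Primes => (1 - fh t ht0 (p : ℕ))⁻¹ := by
    funext p
    have hx1 : ((p : ℕ) : ℝ) ^ (-t) < 1 := by linarith [xp_lt_half ht p]
    simp only [Function.comp_apply, Real.exp_neg, Real.exp_log (by linarith : (0:ℝ) < 1 - ((p : ℕ) : ℝ) ^ (-t))]
    rfl
  rw [hfun] at hexp
  have heq : Real.exp (∑' p : Nat.Primes, -Real.log (1 - ((p : ℕ) : ℝ) ^ (-t))) = zetaR t := by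
    rw [hexp.unique hprod]
    show (∑' n : ℕ, (n : ℝ) ^ (-t)) = zetaR t
    rw [zetaR_eq' ht, zetaR]
  have : Real.log (zetaR t) = ∑' p : Nat.Primes, -Real.log (1 - ((p : ℕ) : ℝ) ^ (-t)) := by
    rw [← heq, Real.log_exp]
  rw [this]
  exact hsum.hasSum

lemma hasSum_log_zeta_double {t : ℝ} (ht : 1 < t) :
    HasSum (fun pm : Nat.Primes × ℕ =>
      (((pm.1 : ℕ) : ℝ) ^ (-t)) ^ (pm.2 + 1) / (pm.2 + 1)) (Real.log (zetaR t)) := by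
  have hrow : ∀ p : Nat.Primes,
      HasSum (fun m : ℕ => (((p : ℕ) : ℝ) ^ (-t)) ^ (m + 1) / (m + 1))
        (-Real.log (1 - ((p : ℕ) : ℝ) ^ (-t))) := fun p =>
    Real.hasSum_pow_div_log_of_abs_lt_one
      (by rw [abs_of_nonneg (xp_pos t p).le]; linarith [xp_lt_half ht p])
  have hsummable : Summable (fun pm : Nat.Primes × ℕ =>
      (((pm.1 : ℕ) : ℝ) ^ (-t)) ^ (pm.2 + 1) / (pm.2 + 1)) := by
    rw [summable_prod_of_nonneg (fun pm => by positivity)]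
    exact ⟨fun p => (hrow p).summable,
      (summable_neg_log ht).congr fun p => ((hrow p).tsum_eq).symm⟩
  have hval : (∑' pm : Nat.Primes × ℕ, (((pm.1 : ℕ) : ℝ) ^ (-t)) ^ (pm.2 + 1) / (pm.2 + 1))
      = Real.log (zetaR t) := by
    rw [Summable.tsum_prod' hsummable fun p => (hrow p).summable]
    rw [tsum_congr fun p => (hrow p).tsum_eq]
    exact (hasSum_log_zeta ht).tsum_eq
  exact hval ▸ hsummable.hasSum


lemma hasSum_moebius_prime {x : ℝ} (h0 : 0 < x) (h1 : x < 1 / 2) :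
    HasSum (fun km : ℕ × ℕ =>
      ((ArithmeticFunction.moebius (km.1 + 1) : ℤ) : ℝ) / ((km.1 : ℝ) + 1) *
        ((x ^ (km.1 + 1)) ^ (km.2 + 1) / ((km.2 : ℝ) + 1))) x := by
  have hx1 : x < 1 := by linarith
  set F : ℕ × ℕ → ℝ := fun ab =>
    if ab.1 = 0 ∨ ab.2 = 0 then 0
    else ((ArithmeticFunction.moebius ab.1 : ℤ) : ℝ) / ab.1 * (x ^ (ab.1 * ab.2) / ab.2)
    with hFdef
  have hbnd : ∀ ab : ℕ × ℕ, ‖F ab‖ ≤ x⁻¹ * (x ^ ab.1 * x ^ ab.2) := by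
    rintro ⟨a, b⟩
    by_cases h : a = 0 ∨ b = 0
    · simp only [hFdef, if_pos h]
      rw [norm_zero]
      positivity
    · push_neg at h
      obtain ⟨ha, hb⟩ := h
      obtain ⟨a', rfl⟩ : ∃ a', a = a' + 1 := ⟨a - 1, by omega⟩
      obtain ⟨b', rfl⟩ : ∃ b', b = b' + 1 := ⟨b - 1, by omega⟩
      simp only [hFdef]
      rw [if_neg (show ¬(a' + 1 = 0 ∨ b' + 1 = 0) by omega)]
      have hstep1 : ‖((ArithmeticFunction.moebius (a' + 1) : ℤ) : ℝ) / (↑(a' + 1)) *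
          (x ^ ((a' + 1) * (b' + 1)) / (↑(b' + 1)))‖ ≤ x ^ ((a' + 1) * (b' + 1)) := by
        rw [Real.norm_eq_abs, abs_mul, abs_div, abs_div]
        have hm : |((ArithmeticFunction.moebius (a' + 1) : ℤ) : ℝ)| ≤ 1 := by
          exact_mod_cast ArithmeticFunction.abs_moebius_le_one
        have haa : |((a' + 1 : ℕ) : ℝ)| = ((a' + 1 : ℕ) : ℝ) := abs_of_nonneg (by positivity)
        have hbb : |((b' + 1 : ℕ) : ℝ)| = ((b' + 1 : ℕ) : ℝ) := abs_of_nonneg (by positivity)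
        have hxx : |x ^ ((a' + 1) * (b' + 1))| = x ^ ((a' + 1) * (b' + 1)) :=
          abs_of_nonneg (by positivity)
        rw [haa, hbb, hxx]
        have h1' : |((ArithmeticFunction.moebius (a' + 1) : ℤ) : ℝ)| / ((a' + 1 : ℕ) : ℝ) ≤ 1 := by
          rw [div_le_one (by positivity)]
          calc |((ArithmeticFunction.moebius (a' + 1) : ℤ) : ℝ)| ≤ 1 := hm
            _ ≤ ((a' + 1 : ℕ) : ℝ) := by exact_mod_cast Nat.one_le_iff_ne_zero.mpr (by omega)
        have h2' : x ^ ((a' + 1) * (b' + 1)) / ((b' + 1 : ℕ) : ℝ) ≤ x ^ ((a' + 1) * (b' + 1)) := by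
          apply div_le_self (by positivity)
          exact_mod_cast Nat.one_le_iff_ne_zero.mpr (by omega)
        calc _ ≤ 1 * (x ^ ((a' + 1) * (b' + 1)) / ((b' + 1 : ℕ) : ℝ)) := by
              apply mul_le_mul_of_nonneg_right h1' (by positivity)
          _ = x ^ ((a' + 1) * (b' + 1)) / ((b' + 1 : ℕ) : ℝ) := one_mul _
          _ ≤ _ := h2'
      refine hstep1.trans ?_
      have hkey : x ^ ((a' + 1) * (b' + 1)) ≤ x ^ (a' + b' + 1) :=
        pow_le_pow_of_le_one h0.le hx1.le (by nlinarith)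
      refine hkey.trans (le_of_eq ?_)
      have : x ^ (a' + 1) * x ^ (b' + 1) = x * x ^ (a' + b' + 1) := by ring
      rw [this, inv_mul_cancel_left₀ h0.ne']
  have hFs : Summable F := by
    refine Summable.of_norm_bounded ?_ hbnd
    exact (((summable_geometric_of_lt_one h0.le hx1).mul_of_nonneg
      (summable_geometric_of_lt_one h0.le hx1) (fun n => pow_nonneg h0.le n)
      (fun n => pow_nonneg h0.le n))).mul_left x⁻¹
  have hT := hFs.hasSum.tsum_fiberwise fun ab => ab.1 * ab.2
  have hfib : (fun n => ∑' q : (fun ab : ℕ × ℕ => ab.1 * ab.2) ⁻¹' {n}, F q)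
      = fun n => if n = 1 then x else 0 := by
    funext n
    rcases eq_or_ne n 0 with rfl | hn
    · rw [if_neg (by norm_num)]
      have hz : ∀ q : (fun ab : ℕ × ℕ => ab.1 * ab.2) ⁻¹' {(0 : ℕ)}, F q = 0 := by
        rintro ⟨⟨a, b⟩, hq⟩
        simp only [Set.mem_preimage, Set.mem_singleton_iff, Nat.mul_eq_zero] at hq
        simp only [hFdef]
        rw [if_pos hq]
      exact (tsum_congr hz).trans tsum_zero
    · rw [show (fun ab : ℕ × ℕ => ab.1 * ab.2) ⁻¹' {n} = ↑n.divisorsAntidiagonal by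
        ext ab
        simp [Nat.mem_divisorsAntidiagonal, hn]]
      rw [Finset.tsum_subtype' n.divisorsAntidiagonal F]
      have hterm : ∀ ab ∈ n.divisorsAntidiagonal,
          F ab = ((ArithmeticFunction.moebius ab.1 : ℤ) : ℝ) * (x ^ n / n) := by
        intro ab hab
        obtain ⟨hmul, hn0⟩ := Nat.mem_divisorsAntidiagonal.mp hab
        obtain ⟨ha, hb⟩ := Nat.ne_zero_of_mem_divisorsAntidiagonal hab
        simp only [hFdef]
        rw [if_neg (show ¬(ab.1 = 0 ∨ ab.2 = 0) by tauto)]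
        have hcast : ((ab.1 : ℝ)) * (ab.2 : ℝ) = (n : ℝ) := by
          rw [← Nat.cast_mul, hmul]
        rw [div_mul_div_comm, hcast, hmul, mul_div_assoc]
      rw [Finset.sum_congr rfl hterm, ← Finset.sum_mul]
      have h1' : ((ArithmeticFunction.moebius * (ArithmeticFunction.zeta : ArithmeticFunction ℤ)) n)
          = ∑ ab ∈ n.divisorsAntidiagonal, ArithmeticFunction.moebius ab.1 := by
        rw [ArithmeticFunction.mul_apply]
        refine Finset.sum_congr rfl fun ab hab => ?_
        have hb := (Nat.ne_zero_of_mem_divisorsAntidiagonal hab).2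
        rw [ArithmeticFunction.natCoe_apply, ArithmeticFunction.zeta_apply_ne hb, Nat.cast_one,
          mul_one]
      have h2' : (∑ ab ∈ n.divisorsAntidiagonal, ArithmeticFunction.moebius ab.1)
          = if n = 1 then (1 : ℤ) else 0 := by
        rw [← h1', ArithmeticFunction.moebius_mul_coe_zeta, ArithmeticFunction.one_apply]
      rw [show (∑ ab ∈ n.divisorsAntidiagonal, ((ArithmeticFunction.moebius ab.1 : ℤ) : ℝ))
          = ((∑ ab ∈ n.divisorsAntidiagonal, ArithmeticFunction.moebius ab.1 : ℤ) : ℝ) from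
          (Int.cast_sum _ _).symm, h2']
      split_ifs with h
      · subst h; norm_num
      · simp
  rw [hfib] at hT
  have hTx : (∑' ab, F ab) = x := hT.unique (hasSum_ite_eq 1 x)
  have hFx : HasSum F x := hTx ▸ hFs.hasSum
  have hinj : Function.Injective (fun km : ℕ × ℕ => ((km.1 + 1, km.2 + 1) : ℕ × ℕ)) := by
    rintro ⟨a, b⟩ ⟨c, d⟩ h
    simp only [Prod.mk.injEq] at h
    exact Prod.ext (by omega) (by omega)
  have hvan : ∀ ab ∉ Set.range (fun km : ℕ × ℕ => ((km.1 + 1, km.2 + 1) : ℕ × ℕ)), F ab = 0 := by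
    rintro ⟨a, b⟩ hab
    have hz : a = 0 ∨ b = 0 := by
      by_contra hcon
      push_neg at hcon
      exact hab ⟨(a - 1, b - 1), by simp only [Prod.mk.injEq]; omega⟩
    simp only [hFdef]
    rw [if_pos hz]
  have hcomp := (hinj.hasSum_iff hvan).mpr hFx
  have hge : (fun km : ℕ × ℕ =>
      ((ArithmeticFunction.moebius (km.1 + 1) : ℤ) : ℝ) / ((km.1 : ℝ) + 1) *
        ((x ^ (km.1 + 1)) ^ (km.2 + 1) / ((km.2 : ℝ) + 1)))
      = F ∘ (fun km : ℕ × ℕ => ((km.1 + 1, km.2 + 1) : ℕ × ℕ)) := by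
    funext km
    simp only [Function.comp_apply, hFdef]
    rw [if_neg (show ¬(km.1 + 1 = 0 ∨ km.2 + 1 = 0) by omega), ← pow_mul]
    push_cast
    ring
  rw [hge]
  exact hcomp


lemma term_bound {x : ℝ} (h0 : 0 < x) (hx1 : x < 1) (k m : ℕ) :
    ‖((ArithmeticFunction.moebius (k + 1) : ℤ) : ℝ) / ((k : ℝ) + 1) *
      ((x ^ (k + 1)) ^ (m + 1) / ((m : ℝ) + 1))‖ ≤ x * (x ^ k * x ^ m) := by
  have hstep1 : ‖((ArithmeticFunction.moebius (k + 1) : ℤ) : ℝ) / ((k : ℝ) + 1) *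
      ((x ^ (k + 1)) ^ (m + 1) / ((m : ℝ) + 1))‖ ≤ x ^ ((k + 1) * (m + 1)) := by
    rw [← pow_mul, Real.norm_eq_abs, abs_mul, abs_div, abs_div]
    have hm : |((ArithmeticFunction.moebius (k + 1) : ℤ) : ℝ)| ≤ 1 := by
      exact_mod_cast ArithmeticFunction.abs_moebius_le_one
    rw [abs_of_nonneg (by positivity : (0:ℝ) ≤ (k : ℝ) + 1),
      abs_of_nonneg (by positivity : (0:ℝ) ≤ (m : ℝ) + 1),
      abs_of_nonneg (by positivity : (0:ℝ) ≤ x ^ ((k + 1) * (m + 1)))]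
    have h1' : |((ArithmeticFunction.moebius (k + 1) : ℤ) : ℝ)| / ((k : ℝ) + 1) ≤ 1 := by
      rw [div_le_one (by positivity)]
      have hk1 : (1:ℝ) ≤ (k : ℝ) + 1 := by linarith [Nat.cast_nonneg (α := ℝ) k]
      linarith
    have h2' : x ^ ((k + 1) * (m + 1)) / ((m : ℝ) + 1) ≤ x ^ ((k + 1) * (m + 1)) :=
      div_le_self (by positivity) (by linarith [Nat.cast_nonneg (α := ℝ) m])
    calc |((ArithmeticFunction.moebius (k + 1) : ℤ) : ℝ)| / ((k : ℝ) + 1) *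
          (x ^ ((k + 1) * (m + 1)) / ((m : ℝ) + 1))
        ≤ 1 * (x ^ ((k + 1) * (m + 1)) / ((m : ℝ) + 1)) :=
          mul_le_mul_of_nonneg_right h1' (by positivity)
      _ = x ^ ((k + 1) * (m + 1)) / ((m : ℝ) + 1) := one_mul _
      _ ≤ x ^ ((k + 1) * (m + 1)) := h2'
  refine hstep1.trans ?_
  have hkey : x ^ ((k + 1) * (m + 1)) ≤ x ^ (k + m + 1) :=
    pow_le_pow_of_le_one h0.le hx1.le (by nlinarith [Nat.zero_le (k * m)])
  refine hkey.trans (le_of_eq ?_)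
  ring

lemma pow_eq_rpow {s : ℝ} (p : Nat.Primes) (k : ℕ) :
    (((p : ℕ) : ℝ) ^ (-s)) ^ (k + 1) = ((p : ℕ) : ℝ) ^ (-(((k : ℝ) + 1) * s)) := by
  rw [← Real.rpow_natCast (((p : ℕ) : ℝ) ^ (-s)) (k + 1),
    ← Real.rpow_mul (Nat.cast_nonneg _)]
  congr 1
  push_cast
  ring

lemma inner_tsum_le {y : ℝ} (h0 : 0 < y) (hh : y < 1 / 2) :
    Summable (fun km : ℕ × ℕ => y * (y ^ km.1 * y ^ km.2)) ∧
    (∑' km : ℕ × ℕ, y * (y ^ km.1 * y ^ km.2)) ≤ 4 * y := by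
  have hy1 : y < 1 := by linarith
  have hmulsum : Summable (fun km : ℕ × ℕ => y ^ km.1 * y ^ km.2) :=
    (summable_geometric_of_lt_one h0.le hy1).mul_of_nonneg
      (summable_geometric_of_lt_one h0.le hy1)
      (fun n => pow_nonneg h0.le n) (fun n => pow_nonneg h0.le n)
  refine ⟨hmulsum.mul_left y, ?_⟩
  have hgeo : HasSum (fun n : ℕ => y ^ n) (1 - y)⁻¹ :=
    hasSum_geometric_of_lt_one h0.le hy1
  have hprod := (hgeo.mul hgeo hmulsum).mul_left y
  have hval : (∑' km : ℕ × ℕ, y * (y ^ km.1 * y ^ km.2))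
      = y * ((1 - y)⁻¹ * (1 - y)⁻¹) := hprod.tsum_eq
  rw [hval]
  have hinv : (1 - y)⁻¹ ≤ 2 := by
    rw [inv_le_comm₀ (by linarith : (0:ℝ) < 1 - y) two_pos]
    norm_num
    linarith
  have hinv0 : 0 ≤ (1 - y)⁻¹ := inv_nonneg.mpr (by linarith)
  have hsq : (1 - y)⁻¹ * (1 - y)⁻¹ ≤ 4 := by nlinarith
  nlinarith

/-- reindexing equivalence -/
def reEquiv : ℕ × Nat.Primes × ℕ ≃ Nat.Primes × ℕ × ℕ where
  toFun q := (q.2.1, q.1, q.2.2)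
  invFun q := (q.2.1, q.1, q.2.2)
  left_inv q := rfl
  right_inv q := rfl

end PZaux

/-- Möbius inversion: for every real `s > 1`,
`P(s) = ∑_{k ≥ 1} (μ(k)/k) log ζ(k s)`, the series converging. -/
theorem primeZeta_eq_moebius_sum (s : ℝ) (hs : 1 < s) :
    Summable (fun k : ℕ =>
      ((ArithmeticFunction.moebius (k + 1) : ℤ) : ℝ) / ((k : ℝ) + 1) *
        Real.log (zetaR (((k : ℝ) + 1) * s))) ∧
    primeZeta s =
      ∑' k : ℕ, ((ArithmeticFunction.moebius (k + 1) : ℤ) : ℝ) / ((k : ℝ) + 1) *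
        Real.log (zetaR (((k : ℝ) + 1) * s)) := by
  classical
  have hx0 : ∀ p : Nat.Primes, 0 < ((p : ℕ) : ℝ) ^ (-s) := PZaux.xp_pos s
  have hxh : ∀ p : Nat.Primes, ((p : ℕ) : ℝ) ^ (-s) < 1 / 2 := PZaux.xp_lt_half hs
  have hx1 : ∀ p : Nat.Primes, ((p : ℕ) : ℝ) ^ (-s) < 1 := fun p => by linarith [hxh p]
  set G : Nat.Primes × ℕ × ℕ → ℝ := fun q =>
    ((ArithmeticFunction.moebius (q.2.1 + 1) : ℤ) : ℝ) / ((q.2.1 : ℝ) + 1) *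
      (((((q.1 : ℕ) : ℝ) ^ (-s)) ^ (q.2.1 + 1)) ^ (q.2.2 + 1) / ((q.2.2 : ℝ) + 1)) with hGdef
  have hBsum : Summable (fun q : Nat.Primes × ℕ × ℕ =>
      ((q.1 : ℕ) : ℝ) ^ (-s) * ((((q.1 : ℕ) : ℝ) ^ (-s)) ^ q.2.1 *
        (((q.1 : ℕ) : ℝ) ^ (-s)) ^ q.2.2)) := by
    rw [summable_prod_of_nonneg (fun q => by positivity)]
    refine ⟨fun p => ?_, ?_⟩
    · dsimp only
      exact (PZaux.inner_tsum_le (hx0 p) (hxh p)).1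
    · refine Summable.of_nonneg_of_le
        (fun p => tsum_nonneg fun km => by positivity) (fun p => ?_)
        (((PZaux.summable_rpow hs).comp_injective Nat.Primes.coe_nat_injective).mul_left 4)
      dsimp only
      exact (PZaux.inner_tsum_le (hx0 p) (hxh p)).2
  have hG : Summable G := by
    refine Summable.of_norm_bounded hBsum fun q => ?_
    exact PZaux.term_bound (hx0 q.1) (hx1 q.1) q.2.1 q.2.2
  have h1 : (∑' q, G q) = primeZeta s := by
    rw [Summable.tsum_prod' hG (fun p => hG.prod_factor p)]
    rw [tsum_congr (fun p =>
      (PZaux.hasSum_moebius_prime (hx0 p) (hxh p)).tsum_eq)]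
    refine tsum_congr fun p => ?_
    rw [Real.rpow_neg (by positivity), one_div]
  have hG' : Summable (fun q : ℕ × Nat.Primes × ℕ => G (PZaux.reEquiv q)) :=
    PZaux.reEquiv.summable_iff.mpr hG
  have hsum2 : HasSum (fun q : ℕ × Nat.Primes × ℕ => G (PZaux.reEquiv q)) (primeZeta s) := by
    have h := hG'.hasSum
    rwa [PZaux.reEquiv.tsum_eq G, h1] at h
  have hk : ∀ k : ℕ, HasSum (fun pm : Nat.Primes × ℕ => G (PZaux.reEquiv (k, pm)))
      (((ArithmeticFunction.moebius (k + 1) : ℤ) : ℝ) / ((k : ℝ) + 1) *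
        Real.log (zetaR (((k : ℝ) + 1) * s))) := by
    intro k
    have ht : 1 < ((k : ℝ) + 1) * s := by nlinarith [Nat.cast_nonneg (α := ℝ) k]
    have hd := (PZaux.hasSum_log_zeta_double ht).mul_left
      (((ArithmeticFunction.moebius (k + 1) : ℤ) : ℝ) / ((k : ℝ) + 1))
    refine HasSum.congr_fun hd ?_
    intro pm
    simp only [hGdef, PZaux.reEquiv, Equiv.coe_fn_mk, PZaux.pow_eq_rpow]
  exact ⟨(hsum2.prod_fiberwise hk).summable, (hsum2.prod_fiberwise hk).tsum_eq.symm⟩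
end

section
/- As m → ∞ along the reals, the integral I(m) = ∫_m^∞ log ζ(t) dt satisfies lim_{m→∞} 2^m · log 2 · I(m) = 1; equivalently, I(m) is asymptotic to 1/(2^m · log 2). -/
open Filter MeasureTheory Set Real

-- summability of shifted p-series
lemma summableShift (k : ℕ) {t : ℝ} (ht : 1 < t) :
    Summable (fun n : ℕ => 1 / ((n : ℝ) + (k + 1)) ^ t) := by
  have h : Summable (fun n : ℕ => 1 / (n : ℝ) ^ t) :=
    Real.summable_one_div_nat_rpow.mpr ht
  have h2 := h.comp_injective (add_left_injective (k + 1))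
  refine h2.congr fun n => ?_
  simp only [Function.comp]
  push_cast
  ring_nf

lemma one_div_rpow_exp {c : ℝ} (hc : 0 < c) (t : ℝ) :
    1 / c ^ t = Real.exp (-(Real.log c * t)) := by
  rw [Real.rpow_def_of_pos hc, one_div, ← Real.exp_neg]

lemma integrableOn_one_div_rpow {c : ℝ} (hc : 1 < c) (a : ℝ) :
    IntegrableOn (fun t : ℝ => 1 / c ^ t) (Set.Ioi a) := by
  have h := exp_neg_integrableOn_Ioi a (Real.log_pos hc)
  refine h.congr_fun (fun t _ => ?_) measurableSet_Ioi
  rw [one_div_rpow_exp (by linarith) t]; simp only [neg_mul]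

lemma integral_one_div_rpow {c : ℝ} (hc : 1 < c) (a : ℝ) :
    ∫ t in Set.Ioi a, 1 / c ^ t = (1 / c ^ a) / Real.log c := by
  have hb : 0 < Real.log c := Real.log_pos hc
  have hderiv : ∀ x ∈ Set.Ioi a,
      HasDerivAt (fun t : ℝ => -(Real.exp (-(Real.log c * t)) / Real.log c))
        (Real.exp (-(Real.log c * x))) x := by
    intro x _
    have h1 : HasDerivAt (fun t : ℝ => -(Real.log c * t)) (-(Real.log c)) x := by
      simpa using ((hasDerivAt_id x).const_mul (Real.log c)).fun_neg
    have h2 := (Real.hasDerivAt_exp (-(Real.log c * x))).comp x h1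
    have h3 := (h2.div_const (Real.log c)).fun_neg
    have e : Real.exp (-(Real.log c * x)) =
        -(Real.exp (-(Real.log c * x)) * -Real.log c / Real.log c) := by
      rw [mul_neg, neg_div, neg_neg, mul_div_assoc, div_self hb.ne', mul_one]
    rw [e]
    exact h3
  have htend : Tendsto (fun t : ℝ => -(Real.exp (-(Real.log c * t)) / Real.log c))
      atTop (nhds 0) := by
    have h1 : Tendsto (fun t : ℝ => -(Real.log c * t)) atTop atBot :=
      tendsto_neg_atBot_iff.mpr (tendsto_id.const_mul_atTop hb)
    have h2 := Real.tendsto_exp_atBot.comp h1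
    have h3 := (h2.div_const (Real.log c)).neg
    simpa using h3
  have hcont : ContinuousWithinAt
      (fun t : ℝ => -(Real.exp (-(Real.log c * t)) / Real.log c)) (Set.Ici a) a := by
    exact (Continuous.neg (by fun_prop)).continuousWithinAt
  have := integral_Ioi_of_hasDerivAt_of_tendsto hcont hderiv
    ((integrableOn_one_div_rpow hc a).congr_fun
      (fun t _ => one_div_rpow_exp (show (0:ℝ) < c by linarith) t) measurableSet_Ioi) htend
  rw [show (∫ t in Set.Ioi a, 1 / c ^ t) = ∫ t in Set.Ioi a, Real.exp (-(Real.log c * t)) from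
    setIntegral_congr_fun measurableSet_Ioi fun t _ => one_div_rpow_exp (by linarith) t, this]
  rw [one_div_rpow_exp (by linarith) a]
  ring

noncomputable def Etail (t : ℝ) : ℝ := ∑' n : ℕ, 1 / ((n : ℝ) + 2) ^ t

lemma summable1 {t : ℝ} (ht : 1 < t) : Summable (fun n : ℕ => 1 / ((n : ℝ) + 1) ^ t) := by
  have := summableShift 0 ht; simpa using this

lemma summable2 {t : ℝ} (ht : 1 < t) : Summable (fun n : ℕ => 1 / ((n : ℝ) + 2) ^ t) := by
  have := summableShift 1 ht
  refine this.congr fun n => by norm_num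

lemma summable3 {t : ℝ} (ht : 1 < t) : Summable (fun n : ℕ => 1 / ((n : ℝ) + 3) ^ t) := by
  have := summableShift 2 ht
  refine this.congr fun n => by norm_num

lemma zetaR_eq {t : ℝ} (ht : 1 < t) : zetaR t = 1 + Etail t := by
  rw [zetaR, Summable.tsum_eq_zero_add (summable1 ht)]
  congr 1
  · norm_num
  · exact tsum_congr fun n => by push_cast; ring_nf

lemma Etail_nonneg (t : ℝ) : 0 ≤ Etail t := tsum_nonneg fun n => by positivity

lemma zetaR_ge_one {t : ℝ} (ht : 1 < t) : 1 ≤ zetaR t := by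
  rw [zetaR_eq ht]; linarith [Etail_nonneg t]

lemma Etail_ge {t : ℝ} (ht : 1 < t) : 1 / 2 ^ t ≤ Etail t := by
  have h := Summable.le_tsum (summable2 ht) 0 (fun n _ => by positivity)
  simpa [Etail] using h

lemma sum_sq_le : ∑' n : ℕ, 1 / ((n : ℝ) + 3) ^ (2 : ℝ) ≤ 2 := by
  have h0 := hasSum_zeta_two
  have h1 : HasSum (fun n : ℕ => (1 : ℝ) / ((n : ℝ) + 1) ^ (2 : ℝ)) (π ^ 2 / 6) := by
    have h2 := (hasSum_nat_add_iff (f := fun n : ℕ => (1 : ℝ) / (n : ℝ) ^ 2) 1).mpr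
      (by simpa using h0)
    refine h2.congr_fun fun n => ?_
    push_cast
    rw [show ((2:ℝ)) = ((2:ℕ):ℝ) by norm_num, Real.rpow_natCast]
  have hle : ∑' n : ℕ, 1 / ((n : ℝ) + 3) ^ (2 : ℝ) ≤ ∑' n : ℕ, 1 / ((n : ℝ) + 1) ^ (2 : ℝ) := by
    refine Summable.tsum_le_tsum (fun n => ?_) (summable3 (by norm_num)) (summable1 (by norm_num))
    refine one_div_le_one_div_of_le (by positivity) ?_
    exact Real.rpow_le_rpow (by positivity) (by linarith) (by norm_num)
  have hval : ∑' n : ℕ, 1 / ((n : ℝ) + 1) ^ (2 : ℝ) = π ^ 2 / 6 := h1.tsum_eq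
  have hpi : π ^ 2 / 6 ≤ 2 := by nlinarith [Real.pi_lt_d2, Real.pi_pos]
  linarith

lemma Etail_le {t : ℝ} (ht : 2 ≤ t) : Etail t ≤ 1 / 2 ^ t + 18 * (1 / 3 ^ t) := by
  have ht1 : (1 : ℝ) < t := by linarith
  rw [Etail, Summable.tsum_eq_zero_add (summable2 ht1)]
  have h0 : (1 : ℝ) / ((0 : ℕ) + 2 : ℝ) ^ t = 1 / 2 ^ t := by norm_num
  have htail : ∑' n : ℕ, 1 / (((n + 1 : ℕ) : ℝ) + 2) ^ t ≤ 18 * (1 / 3 ^ t) := by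
    have hc : ∀ n : ℕ, 1 / (((n + 1 : ℕ) : ℝ) + 2) ^ t
        ≤ (9 * (1 / 3 ^ t)) * (1 / ((n : ℝ) + 3) ^ (2 : ℝ)) := by
      intro n
      have hx : (0:ℝ) < (n : ℝ) + 3 := by positivity
      have key : (3:ℝ) ^ t / 9 * ((n : ℝ) + 3) ^ (2:ℝ) ≤ ((n : ℝ) + 3) ^ t := by
        have h1 : ((n : ℝ) + 3) ^ t = ((n : ℝ) + 3) ^ (2:ℝ) * ((n : ℝ) + 3) ^ (t - 2) := by
          rw [← Real.rpow_add hx]; ring_nf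
        have h2 : (3:ℝ) ^ (t - 2) ≤ ((n : ℝ) + 3) ^ (t - 2) :=
          Real.rpow_le_rpow (by norm_num) (by linarith) (by linarith)
        have h3 : (3:ℝ) ^ (t - 2) = 3 ^ t / 9 := by
          rw [Real.rpow_sub (by norm_num)]; norm_num
        rw [h3] at h2
        rw [h1]
        calc (3:ℝ) ^ t / 9 * ((n : ℝ) + 3) ^ (2:ℝ)
            ≤ ((n : ℝ) + 3) ^ (t - 2) * ((n : ℝ) + 3) ^ (2:ℝ) :=
              mul_le_mul_of_nonneg_right h2
                (Real.rpow_nonneg (by positivity) (2:ℝ))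
          _ = ((n : ℝ) + 3) ^ (2:ℝ) * ((n : ℝ) + 3) ^ (t - 2) := by ring
      have hcast : (((n + 1 : ℕ) : ℝ) + 2) = (n : ℝ) + 3 := by push_cast; ring
      rw [hcast, div_le_iff₀ (by positivity)]
      have hkey2 := mul_le_mul_of_nonneg_left key
        (le_of_lt (show (0:ℝ) < 9 * (1 / 3 ^ t) * (1 / ((n : ℝ) + 3) ^ (2:ℝ)) by positivity))
      have eq1 : 9 * (1 / 3 ^ t) * (1 / ((n : ℝ) + 3) ^ (2:ℝ)) * ((3:ℝ) ^ t / 9 * ((n : ℝ) + 3) ^ (2:ℝ)) = 1 := by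
        field_simp
      linarith [hkey2, eq1]
    have hsum2 : Summable (fun n : ℕ => (9 * (1 / 3 ^ t)) * (1 / ((n : ℝ) + 3) ^ (2 : ℝ))) :=
      (summable3 (by norm_num)).mul_left _
    have hsum1 : Summable (fun n : ℕ => 1 / (((n + 1 : ℕ) : ℝ) + 2) ^ t) := by
      refine (summable3 ht1).congr fun n => ?_
      push_cast; ring_nf
    calc ∑' n : ℕ, 1 / (((n + 1 : ℕ) : ℝ) + 2) ^ t
        ≤ ∑' n : ℕ, (9 * (1 / 3 ^ t)) * (1 / ((n : ℝ) + 3) ^ (2 : ℝ)) :=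
          Summable.tsum_le_tsum hc hsum1 hsum2
      _ = (9 * (1 / 3 ^ t)) * ∑' n : ℕ, 1 / ((n : ℝ) + 3) ^ (2 : ℝ) := tsum_mul_left
      _ ≤ (9 * (1 / 3 ^ t)) * 2 := by
          have := sum_sq_le
          have h9 : (0:ℝ) ≤ 9 * (1 / 3 ^ t) := by positivity
          nlinarith
      _ = 18 * (1 / 3 ^ t) := by ring
  push_cast at h0 htail ⊢
  linarith [htail, le_of_eq h0]

lemma log_zetaR_nonneg {t : ℝ} (ht : 1 < t) : 0 ≤ Real.log (zetaR t) :=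
  Real.log_nonneg (zetaR_ge_one ht)

lemma log_zetaR_le {t : ℝ} (ht : 1 < t) : Real.log (zetaR t) ≤ Etail t := by
  rw [zetaR_eq ht]
  have h := Real.log_le_sub_one_of_pos (x := 1 + Etail t) (by linarith [Etail_nonneg t])
  linarith

lemma log_one_add_ge {x : ℝ} (hx : 0 ≤ x) : x - x ^ 2 ≤ Real.log (1 + x) := by
  have h1x : (0:ℝ) < 1 + x := by linarith
  have h := Real.log_le_sub_one_of_pos (x := 1 / (1 + x)) (by positivity)
  rw [Real.log_div one_ne_zero (by positivity), Real.log_one, zero_sub] at h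
  have key : x - x ^ 2 ≤ 1 - 1 / (1 + x) := by
    have e1 : 1 - 1 / (1 + x) = x / (1 + x) := by field_simp; ring
    rw [e1, le_div_iff₀ h1x]
    nlinarith
  linarith

lemma log_zetaR_ge {t : ℝ} (ht : 1 < t) :
    Etail t - (Etail t) ^ 2 ≤ Real.log (zetaR t) := by
  rw [zetaR_eq ht]
  exact log_one_add_ge (Etail_nonneg t)

lemma Etail_le' {t : ℝ} (ht : 2 ≤ t) : Etail t ≤ 19 * (1 / 2 ^ t) := by
  have h1 := Etail_le ht
  have h2 : (1:ℝ) / 3 ^ t ≤ 1 / 2 ^ t := by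
    refine one_div_le_one_div_of_le (by positivity) ?_
    exact Real.rpow_le_rpow (by norm_num) (by norm_num) (by linarith)
  linarith

lemma four_rpow (t : ℝ) : (4:ℝ) ^ t = 2 ^ t * 2 ^ t := by
  rw [← Real.mul_rpow (by norm_num) (by norm_num)]; norm_num

lemma Etail_sq_le {t : ℝ} (ht : 2 ≤ t) : (Etail t) ^ 2 ≤ 361 * (1 / 4 ^ t) := by
  have h1 := Etail_le' ht
  have h0 := Etail_nonneg t
  have hsq : (Etail t) ^ 2 ≤ (19 * (1 / 2 ^ t)) ^ 2 := by nlinarith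
  have h4 : (19 * ((1:ℝ) / 2 ^ t)) ^ 2 = 361 * (1 / 4 ^ t) := by
    rw [four_rpow]
    have : (0:ℝ) < 2 ^ t := by positivity
    field_simp
    ring
  linarith

lemma log_zetaR_upper {t : ℝ} (ht : 2 ≤ t) :
    Real.log (zetaR t) ≤ 1 / 2 ^ t + 18 * (1 / 3 ^ t) :=
  le_trans (log_zetaR_le (by linarith)) (Etail_le ht)

lemma log_zetaR_lower {t : ℝ} (ht : 2 ≤ t) :
    1 / 2 ^ t - 361 * (1 / 4 ^ t) ≤ Real.log (zetaR t) := by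
  have h1 := log_zetaR_ge (show (1:ℝ) < t by linarith)
  have h2 := Etail_ge (show (1:ℝ) < t by linarith)
  have h3 := Etail_sq_le ht
  linarith

lemma zetaR_anti {a b : ℝ} (ha : 1 < a) (hab : a ≤ b) : zetaR b ≤ zetaR a := by
  unfold zetaR
  refine Summable.tsum_le_tsum (fun n => ?_) (summable1 (show (1:ℝ) < b by linarith)) (summable1 ha)
  have h1 : (1:ℝ) ≤ (n:ℝ) + 1 := by linarith [(Nat.cast_nonneg n : (0:ℝ) ≤ n)]
  refine one_div_le_one_div_of_le (by positivity) ?_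
  exact Real.rpow_le_rpow_of_exponent_le h1 hab

lemma Etail_decay {m t : ℝ} (hm : 1 < m) (hmt : m ≤ t) :
    Etail t ≤ (2 ^ m * Etail m) * (1 / 2 ^ t) := by
  have hterm : ∀ n : ℕ, 1 / ((n:ℝ)+2) ^ t ≤ (2 ^ m * (1 / 2 ^ t)) * (1 / ((n:ℝ)+2) ^ m) := by
    intro n
    have h2 : (2:ℝ) ≤ (n:ℝ) + 2 := by linarith [(Nat.cast_nonneg n : (0:ℝ) ≤ n)]
    have hkey : 2 ^ t / 2 ^ m * ((n:ℝ)+2) ^ m ≤ ((n:ℝ)+2) ^ t := by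
      have e1 : ((n:ℝ)+2) ^ t = ((n:ℝ)+2) ^ m * ((n:ℝ)+2) ^ (t - m) := by
        rw [← Real.rpow_add (by positivity)]; ring_nf
      have e2 : (2:ℝ) ^ (t - m) ≤ ((n:ℝ)+2) ^ (t-m) :=
        Real.rpow_le_rpow (by norm_num) h2 (by linarith)
      have e3 : (2:ℝ) ^ (t - m) = 2 ^ t / 2 ^ m := Real.rpow_sub (by norm_num) t m
      rw [e1, ← e3]
      calc 2^(t-m) * ((n:ℝ)+2)^m ≤ ((n:ℝ)+2)^(t-m) * ((n:ℝ)+2)^m :=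
            mul_le_mul_of_nonneg_right e2 (Real.rpow_nonneg (by positivity) m)
        _ = ((n:ℝ)+2)^m * ((n:ℝ)+2)^(t-m) := by ring
    rw [div_le_iff₀ (by positivity)]
    have hpos : (0:ℝ) < 2 ^ m * (1/2^t) * (1 / ((n:ℝ)+2)^m) := by positivity
    have hkey2 := mul_le_mul_of_nonneg_left hkey (le_of_lt hpos)
    have a1 : ((2:ℝ) ^ m) ≠ 0 := by positivity
    have a2 : ((2:ℝ) ^ t) ≠ 0 := by positivity
    have a3 : (((n:ℝ)+2) ^ m) ≠ 0 := by positivity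
    have eq1 : 2 ^ m * (1/2^t) * (1 / ((n:ℝ)+2)^m) * (2^t/2^m * ((n:ℝ)+2)^m) = 1 := by
      field_simp
    linarith
  calc Etail t ≤ ∑' n : ℕ, (2 ^ m * (1 / 2 ^ t)) * (1 / ((n:ℝ)+2) ^ m) :=
        Summable.tsum_le_tsum hterm (summable2 (by linarith)) ((summable2 hm).mul_left _)
    _ = (2 ^ m * (1 / 2 ^ t)) * Etail m := tsum_mul_left
    _ = (2 ^ m * Etail m) * (1 / 2 ^ t) := by ring

lemma aesm_log_zetaR {m : ℝ} (hm : 1 < m) :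
    AEStronglyMeasurable (fun t : ℝ => Real.log (zetaR t))
      (MeasureTheory.volume.restrict (Set.Ici m)) := by
  have hanti : Antitone (fun t : ℝ => zetaR (max t m)) := fun s t hst =>
    zetaR_anti (lt_of_lt_of_le hm (le_max_right s m)) (max_le_max hst le_rfl)
  have hmeas : Measurable (fun t : ℝ => Real.log (zetaR (max t m))) :=
    Real.measurable_log.comp hanti.measurable
  refine hmeas.aestronglyMeasurable.congr ?_
  filter_upwards [ae_restrict_mem measurableSet_Ici] with t ht
  rw [max_eq_left ht]

lemma integrableOn_log_zetaR {m : ℝ} (hm : 1 < m) :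
    IntegrableOn (fun t : ℝ => Real.log (zetaR t)) (Set.Ici m) := by
  have hb : IntegrableOn (fun t : ℝ => (2 ^ m * Etail m) * (1 / 2 ^ t)) (Set.Ici m) := by
    rw [integrableOn_Ici_iff_integrableOn_Ioi]
    exact (integrableOn_one_div_rpow one_lt_two m).const_mul _
  refine Integrable.mono hb (aesm_log_zetaR hm) ?_
  filter_upwards [ae_restrict_mem measurableSet_Ici] with t ht
  have ht1 : 1 < t := lt_of_lt_of_le hm ht
  rw [Real.norm_eq_abs, Real.norm_eq_abs, abs_of_nonneg (log_zetaR_nonneg ht1),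
    abs_of_nonneg (mul_nonneg (mul_nonneg (Real.rpow_nonneg (by norm_num) m)
      (Etail_nonneg m)) (by positivity))]
  exact le_trans (log_zetaR_le ht1) (Etail_decay hm ht)

/-- The integral `I(m) = ∫_m^∞ log ζ(t) dt` converges for every `m > 1` and satisfies
`lim_{m→∞} 2^m log 2 · I(m) = 1`; that is, `I(m) ~ 1/(2^m log 2)`. -/
theorem tendsto_two_rpow_mul_integral_log_zeta :
    (∀ m : ℝ, 1 < m →
      IntegrableOn (fun t : ℝ => Real.log (zetaR t)) (Set.Ici m)) ∧
    Tendsto (fun m : ℝ =>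
        (2 : ℝ) ^ m * Real.log 2 * ∫ t in Set.Ici m, Real.log (zetaR t))
      atTop (nhds 1) := by
  have hint : ∀ m : ℝ, 1 < m → IntegrableOn (fun t : ℝ => Real.log (zetaR t)) (Set.Ici m) :=
    fun m hm => integrableOn_log_zetaR hm
  refine ⟨hint, ?_⟩
  have hlog2 : (0:ℝ) < Real.log 2 := Real.log_pos (by norm_num)
  have hlog3 : (0:ℝ) < Real.log 3 := Real.log_pos (by norm_num)
  have hlog4 : (0:ℝ) < Real.log 4 := Real.log_pos (by norm_num)
  have key : ∀ m : ℝ, 2 ≤ m →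
      (1 - 361 * (Real.log 2 / Real.log 4) * ((1:ℝ)/2) ^ m ≤
        2 ^ m * Real.log 2 * ∫ t in Set.Ici m, Real.log (zetaR t))
      ∧ (2 ^ m * Real.log 2 * ∫ t in Set.Ici m, Real.log (zetaR t) ≤
        1 + 18 * (Real.log 2 / Real.log 3) * ((2:ℝ)/3) ^ m) := by
    intro m hm
    have hm1 : (1:ℝ) < m := by linarith
    have hI : IntegrableOn (fun t : ℝ => Real.log (zetaR t)) (Set.Ioi m) :=
      (hint m hm1).mono_set Set.Ioi_subset_Ici_self
    have hIeq : (∫ t in Set.Ici m, Real.log (zetaR t)) = ∫ t in Set.Ioi m, Real.log (zetaR t) :=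
      MeasureTheory.integral_Ici_eq_integral_Ioi
    have i2 := integrableOn_one_div_rpow (show (1:ℝ) < 2 by norm_num) m
    have i3 := integrableOn_one_div_rpow (show (1:ℝ) < 3 by norm_num) m
    have i4 := integrableOn_one_div_rpow (show (1:ℝ) < 4 by norm_num) m
    have hup : (∫ t in Set.Ioi m, Real.log (zetaR t)) ≤
        ∫ t in Set.Ioi m, (1 / 2 ^ t + 18 * (1 / 3 ^ t)) := by
      refine setIntegral_mono_on hI (i2.add (i3.const_mul 18)) measurableSet_Ioi ?_
      intro t ht
      exact log_zetaR_upper (by exact le_of_lt (lt_of_le_of_lt hm ht))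
    have hlo : (∫ t in Set.Ioi m, (1 / 2 ^ t - 361 * (1 / 4 ^ t))) ≤
        ∫ t in Set.Ioi m, Real.log (zetaR t) := by
      refine setIntegral_mono_on (i2.sub (i4.const_mul 361)) hI measurableSet_Ioi ?_
      intro t ht
      exact log_zetaR_lower (by exact le_of_lt (lt_of_le_of_lt hm ht))
    have hU : (∫ t in Set.Ioi m, (1 / 2 ^ t + 18 * (1 / 3 ^ t))) =
        (1 / 2 ^ m) / Real.log 2 + 18 * ((1 / 3 ^ m) / Real.log 3) := by
      rw [MeasureTheory.integral_add i2 (i3.const_mul 18), MeasureTheory.integral_const_mul,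
        integral_one_div_rpow (by norm_num : (1:ℝ) < 2) m,
        integral_one_div_rpow (by norm_num : (1:ℝ) < 3) m]
    have hL : (∫ t in Set.Ioi m, (1 / 2 ^ t - 361 * (1 / 4 ^ t))) =
        (1 / 2 ^ m) / Real.log 2 - 361 * ((1 / 4 ^ m) / Real.log 4) := by
      rw [MeasureTheory.integral_sub i2 (i4.const_mul 361), MeasureTheory.integral_const_mul,
        integral_one_div_rpow (by norm_num : (1:ℝ) < 2) m,
        integral_one_div_rpow (by norm_num : (1:ℝ) < 4) m]
    have hp2 : (0:ℝ) < 2 ^ m := Real.rpow_pos_of_pos (by norm_num) m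
    have hp3 : (0:ℝ) < 3 ^ m := Real.rpow_pos_of_pos (by norm_num) m
    have hp4 : (0:ℝ) < 4 ^ m := Real.rpow_pos_of_pos (by norm_num) m
    have e23 : ((2:ℝ)/3) ^ m = 2 ^ m / 3 ^ m := Real.div_rpow (by norm_num) (by norm_num) m
    have e24 : ((1:ℝ)/2) ^ m = 2 ^ m / 4 ^ m := by
      rw [show ((1:ℝ)/2) = 2/4 by norm_num, Real.div_rpow (by norm_num) (by norm_num)]
    have hc : (0:ℝ) ≤ 2 ^ m * Real.log 2 := by positivity
    constructor
    · have h1 := mul_le_mul_of_nonneg_left (hL ▸ hlo) hc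
      rw [← hIeq] at h1
      refine le_trans (le_of_eq ?_) h1
      rw [e24]
      field_simp
    · have h1 := mul_le_mul_of_nonneg_left (hU ▸ hup) hc
      rw [← hIeq] at h1
      refine le_trans h1 (le_of_eq ?_)
      rw [e23]
      field_simp
  have t1 : Tendsto (fun m : ℝ => 1 - 361 * (Real.log 2 / Real.log 4) * ((1:ℝ)/2) ^ m)
      atTop (nhds 1) := by
    have h0 := tendsto_rpow_atTop_of_base_lt_one (1/2) (by norm_num) (by norm_num)
    have h1 := (h0.const_mul (361 * (Real.log 2 / Real.log 4))).const_sub 1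
    simpa using h1
  have t2 : Tendsto (fun m : ℝ => 1 + 18 * (Real.log 2 / Real.log 3) * ((2:ℝ)/3) ^ m)
      atTop (nhds 1) := by
    have h0 := tendsto_rpow_atTop_of_base_lt_one (2/3) (by norm_num) (by norm_num)
    have h1 := (h0.const_mul (18 * (Real.log 2 / Real.log 3))).const_add 1
    simpa using h1
  refine tendsto_of_tendsto_of_tendsto_of_le_of_le' t1 t2 ?_ ?_
  · filter_upwards [eventually_ge_atTop (2:ℝ)] with m hm
    exact (key m hm).1
  · filter_upwards [eventually_ge_atTop (2:ℝ)] with m hm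
    exact (key m hm).2
end

section
/- For every integer s ≥ 2 and every integer a ≥ 1, the recursion Σ_{p prime} 1/((a+p)^s · log p) = Σ_{l=0}^∞ binom(s+l-1, s-1) · (-1)^l · Σ_{p prime} 1/((a-1+p)^{s+l} · log p) holds, with all series converging. -/
private lemma key_hasSum (s : ℕ) (hs : 2 ≤ s) {x c ε : ℝ} (hx : 2 ≤ x) (hc : 0 < c)
    (hε : |ε| = 1) :
    HasSum (fun l : ℕ => ((s + l - 1).choose (s - 1) : ℝ) * ε ^ l * (1 / (x ^ (s + l) * c)))
      (1 / ((x - ε) ^ s * c)) := by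
  have hx0 : (0:ℝ) < x := by linarith
  have hxne : x ≠ 0 := ne_of_gt hx0
  have hxe : (0:ℝ) < x - ε := by
    have : ε ≤ 1 := by rw [← hε]; exact le_abs_self ε
    linarith
  have hr : ‖(ε / x : ℝ)‖ < 1 := by
    rw [Real.norm_eq_abs, abs_div, hε, abs_of_pos hx0, div_lt_one hx0]; linarith
  have h := (hasSum_choose_mul_geometric_of_norm_lt_one (s - 1) hr).mul_right (1 / (x ^ s * c))
  have heq : (fun l : ℕ => ((s + l - 1).choose (s - 1) : ℝ) * ε ^ l * (1 / (x ^ (s + l) * c)))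
      = fun l : ℕ => ((l + (s - 1)).choose (s - 1) : ℝ) * (ε / x) ^ l * (1 / (x ^ s * c)) := by
    funext l
    rw [show s + l - 1 = l + (s - 1) by omega, pow_add, div_pow]
    field_simp
  have h2 : (x - ε) ^ s ≠ 0 := pow_ne_zero _ (ne_of_gt hxe)
  have h3 : (x:ℝ) ^ s ≠ 0 := pow_ne_zero _ hxne
  have hsum : 1 / ((1:ℝ) - ε / x) ^ (s - 1 + 1) * (1 / (x ^ s * c)) = 1 / ((x - ε) ^ s * c) := by
    have h1 : (1:ℝ) - ε / x = (x - ε) / x := by field_simp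
    rw [show s - 1 + 1 = s by omega, h1, div_pow]
    field_simp
  rw [heq, ← hsum]
  exact h

set_option maxHeartbeats 1000000 in
/-- For every integer `s ≥ 2` and every integer `a ≥ 1`,
`∑_p 1/((a+p)^s log p)
  = ∑_{l ≥ 0} C(s+l-1, s-1) (-1)^l ∑_p 1/((a-1+p)^{s+l} log p)`,
with all series converging. -/
theorem sum_shifted_pow_log_recursion (s a : ℕ) (hs : 2 ≤ s) (ha : 1 ≤ a) :
    Summable (fun p : Nat.Primes =>
      1 / (((a : ℝ) + ((p : ℕ) : ℝ)) ^ s * Real.log ((p : ℕ) : ℝ))) ∧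
    (∀ l : ℕ, Summable (fun p : Nat.Primes =>
      1 / (((a : ℝ) - 1 + ((p : ℕ) : ℝ)) ^ (s + l) * Real.log ((p : ℕ) : ℝ)))) ∧
    Summable (fun l : ℕ => ((s + l - 1).choose (s - 1) : ℝ) * (-1 : ℝ) ^ l *
      ∑' p : Nat.Primes,
        1 / (((a : ℝ) - 1 + ((p : ℕ) : ℝ)) ^ (s + l) * Real.log ((p : ℕ) : ℝ))) ∧
    ∑' p : Nat.Primes, 1 / (((a : ℝ) + ((p : ℕ) : ℝ)) ^ s * Real.log ((p : ℕ) : ℝ)) =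
      ∑' l : ℕ, ((s + l - 1).choose (s - 1) : ℝ) * (-1 : ℝ) ^ l *
        ∑' p : Nat.Primes,
          1 / (((a : ℝ) - 1 + ((p : ℕ) : ℝ)) ^ (s + l) * Real.log ((p : ℕ) : ℝ)) := by
  have ha1 : (1:ℝ) ≤ (a:ℝ) := by exact_mod_cast ha
  have hP : ∀ p : Nat.Primes, (2:ℝ) ≤ ((p:ℕ):ℝ) := fun p => by exact_mod_cast p.2.two_le
  have hlog2 : (0:ℝ) < Real.log 2 := Real.log_pos (by norm_num)
  have hL : ∀ p : Nat.Primes, Real.log 2 ≤ Real.log ((p:ℕ):ℝ) :=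
    fun p => Real.log_le_log (by norm_num) (hP p)
  have hL0 : ∀ p : Nat.Primes, (0:ℝ) < Real.log ((p:ℕ):ℝ) :=
    fun p => lt_of_lt_of_le hlog2 (hL p)
  have hx2 : ∀ p : Nat.Primes, (2:ℝ) ≤ (a:ℝ) - 1 + ((p:ℕ):ℝ) := fun p => by
    have := hP p; linarith
  have hbase : Summable (fun p : Nat.Primes => 1 / ((p:ℕ):ℝ) ^ 2) := by
    have h := Real.summable_one_div_nat_pow.mpr (by norm_num : 1 < 2)
    exact h.comp_injective Nat.Primes.coe_nat_injective
  -- part (2)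
  have h2 : ∀ l : ℕ, Summable (fun p : Nat.Primes =>
      1 / (((a : ℝ) - 1 + ((p : ℕ) : ℝ)) ^ (s + l) * Real.log ((p : ℕ) : ℝ))) := by
    intro l
    refine Summable.of_nonneg_of_le
      (fun p => le_of_lt (div_pos one_pos
        (mul_pos (pow_pos (by linarith [hx2 p]) _) (hL0 p))))
      (fun p => ?_) (hbase.mul_left (1 / Real.log 2))
    have hPp := hP p
    have hLp := hL p
    have hpow : ((p:ℕ):ℝ) ^ 2 ≤ ((a:ℝ) - 1 + ((p:ℕ):ℝ)) ^ (s + l) :=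
      calc ((p:ℕ):ℝ) ^ 2 ≤ ((p:ℕ):ℝ) ^ (s + l) :=
            pow_le_pow_right₀ (by linarith) (by omega)
        _ ≤ ((a:ℝ) - 1 + ((p:ℕ):ℝ)) ^ (s + l) :=
            pow_le_pow_left₀ (by linarith) (by linarith) _
    rw [div_mul_div_comm, one_mul]
    refine one_div_le_one_div_of_le (mul_pos hlog2 (by positivity)) ?_
    calc Real.log 2 * ((p:ℕ):ℝ) ^ 2
        ≤ Real.log ((p:ℕ):ℝ) * ((a:ℝ) - 1 + ((p:ℕ):ℝ)) ^ (s + l) :=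
          mul_le_mul hLp hpow (by positivity) (hL0 p).le
      _ = ((a:ℝ) - 1 + ((p:ℕ):ℝ)) ^ (s + l) * Real.log ((p:ℕ):ℝ) := mul_comm _ _
  -- absolute row sums
  have habs : ∀ p : Nat.Primes, HasSum
      (fun l : ℕ => ((s + l - 1).choose (s - 1) : ℝ) *
        (1 / (((a:ℝ) - 1 + ((p:ℕ):ℝ)) ^ (s + l) * Real.log ((p:ℕ):ℝ))))
      (1 / (((a:ℝ) - 1 + ((p:ℕ):ℝ) - 1) ^ s * Real.log ((p:ℕ):ℝ))) := fun p => by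
    simpa using key_hasSum s hs (hx2 p) (hL0 p) (abs_one)
  -- signed row sums
  have hsgn : ∀ p : Nat.Primes, HasSum
      (fun l : ℕ => ((s + l - 1).choose (s - 1) : ℝ) * (-1:ℝ) ^ l *
        (1 / (((a:ℝ) - 1 + ((p:ℕ):ℝ)) ^ (s + l) * Real.log ((p:ℕ):ℝ))))
      (1 / (((a:ℝ) + ((p:ℕ):ℝ)) ^ s * Real.log ((p:ℕ):ℝ))) := fun p => by
    have h := key_hasSum s hs (hx2 p) (hL0 p) (ε := -1) (by norm_num)
    rwa [show (a:ℝ) - 1 + ((p:ℕ):ℝ) - (-1) = (a:ℝ) + ((p:ℕ):ℝ) by ring] at h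
  -- summability of the absolute double series
  have hG : Summable (fun q : Nat.Primes × ℕ =>
      ((s + q.2 - 1).choose (s - 1) : ℝ) *
        (1 / (((a:ℝ) - 1 + ((q.1:ℕ):ℝ)) ^ (s + q.2) * Real.log ((q.1:ℕ):ℝ)))) := by
    refine (summable_prod_of_nonneg (fun q => mul_nonneg (Nat.cast_nonneg _)
      (le_of_lt (div_pos one_pos
        (mul_pos (pow_pos (by linarith [hx2 q.1]) _) (hL0 q.1)))))).mpr
      ⟨fun p => (habs p).summable, ?_⟩
    refine Summable.of_nonneg_of_le
      (fun p => tsum_nonneg fun l => mul_nonneg (Nat.cast_nonneg _)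
        (le_of_lt (div_pos one_pos
          (mul_pos (pow_pos (by linarith [hx2 p]) _) (hL0 p))))) (fun p => ?_)
      (hbase.mul_left (2 ^ s / Real.log 2))
    rw [(habs p).tsum_eq, div_mul_div_comm, mul_one]
    have hPp := hP p
    have hLp := hL p
    rw [div_le_div_iff₀ (mul_pos (pow_pos (by linarith [hx2 p]) _) (hL0 p))
      (mul_pos hlog2 (by positivity)), one_mul]
    have e2 : ((p:ℕ):ℝ) ^ s ≤ (2 * ((a:ℝ) - 1 + ((p:ℕ):ℝ) - 1)) ^ s :=
      pow_le_pow_left₀ (by linarith) (by linarith) s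
    calc Real.log 2 * ((p:ℕ):ℝ) ^ 2
        ≤ Real.log ((p:ℕ):ℝ) * ((p:ℕ):ℝ) ^ s := by
          apply mul_le_mul hLp (pow_le_pow_right₀ (by linarith) hs) (by positivity) (hL0 p).le
      _ ≤ Real.log ((p:ℕ):ℝ) * (2 ^ s * ((a:ℝ) - 1 + ((p:ℕ):ℝ) - 1) ^ s) := by
          apply mul_le_mul_of_nonneg_left (e2.trans_eq (mul_pow 2 _ s)) (hL0 p).le
      _ = 2 ^ s * (((a:ℝ) - 1 + ((p:ℕ):ℝ) - 1) ^ s * Real.log ((p:ℕ):ℝ)) := by ring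
  have hF : Summable (fun q : Nat.Primes × ℕ =>
      ((s + q.2 - 1).choose (s - 1) : ℝ) * (-1:ℝ) ^ q.2 *
        (1 / (((a:ℝ) - 1 + ((q.1:ℕ):ℝ)) ^ (s + q.2) * Real.log ((q.1:ℕ):ℝ)))) := by
    apply Summable.of_norm
    have : (fun q : Nat.Primes × ℕ => ‖((s + q.2 - 1).choose (s - 1) : ℝ) * (-1:ℝ) ^ q.2 *
        (1 / (((a:ℝ) - 1 + ((q.1:ℕ):ℝ)) ^ (s + q.2) * Real.log ((q.1:ℕ):ℝ)))‖)
        = fun q : Nat.Primes × ℕ => ((s + q.2 - 1).choose (s - 1) : ℝ) *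
        (1 / (((a:ℝ) - 1 + ((q.1:ℕ):ℝ)) ^ (s + q.2) * Real.log ((q.1:ℕ):ℝ))) := by
      funext q
      rw [Real.norm_eq_abs, abs_mul, abs_mul, abs_pow, abs_neg, abs_one, one_pow, mul_one,
        Nat.abs_cast, abs_of_nonneg (le_of_lt (div_pos one_pos
          (mul_pos (pow_pos (by linarith [hx2 q.1]) _) (hL0 q.1))))]
    rw [this]; exact hG
  have hcol : ∀ l : ℕ, HasSum (fun p : Nat.Primes =>
      ((s + l - 1).choose (s - 1) : ℝ) * (-1:ℝ) ^ l *
        (1 / (((a:ℝ) - 1 + ((p:ℕ):ℝ)) ^ (s + l) * Real.log ((p:ℕ):ℝ))))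
      (((s + l - 1).choose (s - 1) : ℝ) * (-1:ℝ) ^ l * ∑' p : Nat.Primes,
        1 / (((a:ℝ) - 1 + ((p:ℕ):ℝ)) ^ (s + l) * Real.log ((p:ℕ):ℝ))) := fun l =>
    (h2 l).hasSum.mul_left _
  have hLHS := hF.hasSum.prod_fiberwise hsgn
  have hRHS := hF.prod_symm.hasSum.prod_fiberwise hcol
  refine ⟨hLHS.summable, h2, hRHS.summable, ?_⟩
  rw [hLHS.tsum_eq, hRHS.tsum_eq]
  exact ((Equiv.prodComm ℕ Nat.Primes).tsum_eq _).symm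
end
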